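/- Let P be a nonzero sdf-absorbing strong C-hyperideal of a commutative multiplicative hyperring H with identity 1 such that 1 + 1 is a unit of H. Then P is a prime hyperideal of H. -/
import Mathlib


open Pointwise

/-- A commutative multiplicative hyperring structure on an abelian group `H`. -/
structure MulHyperring (H : Type*) [AddCommGroup H] where
  hmul : H → H → Set H
  hmul_nonempty : ∀ x y : H, (hmul x y).Nonempty
  hmul_comm : ∀ x y : H, hmul x y = hmul y x
  hmul_assoc : ∀ x y z : H, (⋃ a ∈ hmul y z, hmul x a) = ⋃ b ∈ hmul x y, hmul b z
  hmul_distrib : ∀ x y z : H, hmul x (y + z) ⊆ hmul x y + hmul x z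
  hmul_neg : ∀ x y : H, hmul x (-y) = -(hmul x y)

namespace Hyper

variable {H : Type*} [AddCommGroup H] (mul : H → H → Set H)

/-- `P` is a hyperideal. -/
def IsIdeal (P : Set H) : Prop :=
  (0 : H) ∈ P ∧ (∀ x ∈ P, ∀ y ∈ P, x - y ∈ P) ∧ ∀ r : H, ∀ x ∈ P, mul r x ⊆ P

/-- Hyperproduct `a ∘ b₁ ∘ ⋯ ∘ bₙ`. -/
def hprod : H → List H → Set H
  | a, [] => {a}
  | a, b :: l => ⋃ t ∈ mul a b, hprod t l

/-- `C` is a finite hyperproduct `c₁ ∘ ⋯ ∘ cₙ`. -/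
def IsProduct (C : Set H) : Prop := ∃ (a : H) (l : List H), C = hprod mul a l

/-- `D` is a finite (nonempty) sum of finite hyperproducts. -/
def IsSum (D : Set H) : Prop :=
  ∃ L : List (Set H), L ≠ [] ∧ (∀ C ∈ L, IsProduct mul C) ∧ D = L.sum

/-- `P` is a `𝒞`-hyperideal. -/
def IsCIdeal (P : Set H) : Prop :=
  IsIdeal mul P ∧ ∀ C : Set H, IsProduct mul C → (C ∩ P).Nonempty → C ⊆ P

/-- `P` is a strong `𝒞`-hyperideal. -/
def IsStrongCIdeal (P : Set H) : Prop :=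
  IsIdeal mul P ∧ ∀ D : Set H, IsSum mul D → (D ∩ P).Nonempty → D ⊆ P

/-- The hypersquare `x² = x ∘ x`. -/
def sq (x : H) : Set H := mul x x

/-- `P` is an sdf-absorbing hyperideal. -/
def IsSdf (P : Set H) : Prop :=
  IsIdeal mul P ∧ P ≠ Set.univ ∧
    ∀ x y : H, x ≠ 0 → y ≠ 0 → sq mul x - sq mul y ⊆ P → x - y ∈ P ∨ x + y ∈ P

/-- `P` is a weakly sdf-absorbing hyperideal. -/
def IsWeaklySdf (P : Set H) : Prop :=
  IsIdeal mul P ∧ P ≠ Set.univ ∧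
    ∀ x y : H, x ≠ 0 → y ≠ 0 → (0 : H) ∉ sq mul x - sq mul y →
      sq mul x - sq mul y ⊆ P → x - y ∈ P ∨ x + y ∈ P

/-- `P` is a prime hyperideal. -/
def IsPrime (P : Set H) : Prop :=
  IsIdeal mul P ∧ P ≠ Set.univ ∧ ∀ x y : H, mul x y ⊆ P → x ∈ P ∨ y ∈ P

/-- The radical: intersection of the prime hyperideals containing `P`. -/
def rad (P : Set H) : Set H := ⋂₀ {Q : Set H | IsPrime mul Q ∧ P ⊆ Q}

/-- `hpow mul x n` is the hyperpower `x^(n+1)`. -/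
def hpow (x : H) (n : ℕ) : Set H := hprod mul x (List.replicate n x)

/-- `x` is nilpotent: `0 ∈ xⁿ` for some `n`. -/
def IsNilpotent (x : H) : Prop := ∃ n : ℕ, (0 : H) ∈ hpow mul x n

/-- `x` is a regular element: `x ∈ x² ∘ y` for some `y`. -/
def IsRegularElem (x : H) : Prop := ∃ y : H, x ∈ ⋃ t ∈ sq mul x, mul t y

/-- The hyperideal generated by a set `S`. -/
def span (S : Set H) : Set H := ⋂₀ {Q : Set H | IsIdeal mul Q ∧ S ⊆ Q}

/-- `P` is a maximal hyperideal. -/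
def IsMaximal (P : Set H) : Prop :=
  IsIdeal mul P ∧ P ≠ Set.univ ∧
    ∀ B : Set H, IsIdeal mul B → P ⊆ B → B = P ∨ B = Set.univ

end Hyper

/-- Componentwise hypermultiplication on a product. -/
def prodMul {H₁ H₂ : Type*} (m₁ : H₁ → H₁ → Set H₁) (m₂ : H₂ → H₂ → Set H₂) :
    H₁ × H₂ → H₁ × H₂ → Set (H₁ × H₂) :=
  fun a b => (m₁ a.1 b.1) ×ˢ (m₂ a.2 b.2)


section AuxStmt13

variable {H : Type*} [AddCommGroup H] (M : MulHyperring H)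

private lemma stmt13_hprod_pair (a b : H) : Hyper.hprod M.hmul a [b] = M.hmul a b := by
  simp [Hyper.hprod]

private lemma stmt13_ideal_neg {P : Set H} (hI : Hyper.IsIdeal M.hmul P) {a : H} (ha : a ∈ P) :
    -a ∈ P := by
  have := hI.2.1 0 hI.1 a ha
  simpa using this

private lemma stmt13_ideal_add {P : Set H} (hI : Hyper.IsIdeal M.hmul P) {a b : H}
    (ha : a ∈ P) (hb : b ∈ P) : a + b ∈ P := by
  have := hI.2.1 a ha (-b) (stmt13_ideal_neg M hI hb)
  simpa using this

private lemma stmt13_mul_neg_left (a b : H) : M.hmul (-a) b = -(M.hmul a b) := by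
  rw [M.hmul_comm, M.hmul_neg, M.hmul_comm]

/-- If `e` is an identity, `e + e` a unit, and `P` a strong C-hyperideal,
then `x + x ∈ P` implies `x ∈ P`. -/
private lemma stmt13_half_mem {P : Set H} (e : H) (he : ∀ x : H, x ∈ M.hmul x e)
    (hunit : ∃ v : H, e ∈ M.hmul (e + e) v)
    (hS : Hyper.IsStrongCIdeal M.hmul P) {x : H} (hx : x + x ∈ P) : x ∈ P := by
  obtain ⟨v, hv⟩ := hunit
  set T : Set H := ⋃ t ∈ M.hmul x e, M.hmul t v with hT
  have hTprod : Hyper.IsProduct M.hmul T := by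
    refine ⟨x, [e, v], ?_⟩
    simp [Hyper.hprod, hT]
  have hsubT : M.hmul v x ⊆ T := by
    intro z hz
    rw [M.hmul_comm] at hz
    exact Set.mem_biUnion (he x) hz
  -- x ∈ T + T
  have hxelem : x ∈ ⋃ b ∈ M.hmul x (e + e), M.hmul b v := by
    rw [← M.hmul_assoc]
    exact Set.mem_biUnion hv (he x)
  rw [Set.mem_iUnion₂] at hxelem
  obtain ⟨b, hb, hxb⟩ := hxelem
  have hb' := M.hmul_distrib x e e hb
  rw [Set.mem_add] at hb'
  obtain ⟨a1, ha1, a2, ha2, hsum⟩ := hb'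
  rw [← hsum, M.hmul_comm] at hxb
  have hx2 := M.hmul_distrib v a1 a2 hxb
  rw [Set.mem_add] at hx2
  obtain ⟨c1, hc1, c2, hc2, hcsum⟩ := hx2
  have hc1T : c1 ∈ T := by
    rw [M.hmul_comm] at hc1
    exact Set.mem_biUnion ha1 hc1
  have hc2T : c2 ∈ T := by
    rw [M.hmul_comm] at hc2
    exact Set.mem_biUnion ha2 hc2
  have hxTT : x ∈ T + T := by
    rw [← hcsum]; exact Set.add_mem_add hc1T hc2T
  -- (T + T) ∩ P is nonempty
  obtain ⟨w, hw⟩ := M.hmul_nonempty v (x + x)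
  have hwP : w ∈ P := hS.1.2.2 v (x + x) hx hw
  have hwTT : w ∈ T + T := by
    have := M.hmul_distrib v x x hw
    exact Set.add_subset_add hsubT hsubT this
  have hsum : Hyper.IsSum M.hmul (T + T) := by
    refine ⟨[T, T], by simp, ?_, by simp⟩
    intro C hC
    fin_cases hC <;> exact hTprod
  exact hS.2 (T + T) hsum ⟨w, hwTT, hwP⟩ hxTT

/-- If `P ≠ {0}` is an sdf hyperideal, `x ≠ 0` and `x² ⊆ P` then `x ∈ P`. -/
private lemma stmt13_sq_mem {P : Set H} (hP0 : P ≠ ({0} : Set H))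
    (hsdf : Hyper.IsSdf M.hmul P) {x : H} (hx0 : x ≠ 0)
    (hx : M.hmul x x ⊆ P) : x ∈ P := by
  have hI := hsdf.1
  have hp : ∃ p ∈ P, p ≠ 0 := by
    by_contra h
    push_neg at h
    exact hP0 (Set.eq_singleton_iff_unique_mem.mpr ⟨hI.1, fun p hp => h p hp⟩)
  obtain ⟨p, hpP, hp0⟩ := hp
  have hsub : Hyper.sq M.hmul x - Hyper.sq M.hmul p ⊆ P := by
    intro u hu
    rw [Set.mem_sub] at hu
    obtain ⟨a, ha, b, hb, hab⟩ := hu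
    have haP : a ∈ P := hx ha
    have hbP : b ∈ P := hI.2.2 p p hpP hb
    rw [← hab]
    exact hI.2.1 a haP b hbP
  rcases hsdf.2.2 x p hx0 hp0 hsub with h | h
  · have := stmt13_ideal_add M hI h hpP
    simpa using this
  · have := hI.2.1 (x + p) h p hpP
    simpa using this

end AuxStmt13


/-- a nonzero sdf-absorbing strong `𝒞`-hyperideal of a hyperring with
identity `e` in which `e + e` is a unit is prime. -/
theorem stmt13 {H : Type*} [AddCommGroup H] (M : MulHyperring H) (e : H)
    (he : ∀ x : H, x ∈ M.hmul x e)
    (hunit : ∃ v : H, e ∈ M.hmul (e + e) v)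
    (P : Set H) (hP0 : P ≠ ({0} : Set H))
    (hS : Hyper.IsStrongCIdeal M.hmul P) (hsdf : Hyper.IsSdf M.hmul P) :
    Hyper.IsPrime M.hmul P := by
  have hI := hS.1
  refine ⟨hI, hsdf.2.1, ?_⟩
  intro x y hxy
  by_cases hx0 : x = 0
  · exact Or.inl (hx0 ▸ hI.1)
  by_cases hy0 : y = 0
  · exact Or.inr (hy0 ▸ hI.1)
  by_cases hxpy : x + y = 0
  · -- y = -x : then x² ⊆ P
    have hyx : y = -x := eq_neg_of_add_eq_zero_right hxpy
    have hxx : M.hmul x x ⊆ P := by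
      intro a ha
      have h1 : -a ∈ P := by
        apply hxy
        rw [hyx, M.hmul_neg]
        exact Set.neg_mem_neg.mpr ha
      simpa using stmt13_ideal_neg M hI h1
    exact Or.inl (stmt13_sq_mem M hP0 hsdf hx0 hxx)
  by_cases hxmy : x - y = 0
  · have hxy' : x = y := sub_eq_zero.mp hxmy
    subst hxy'
    exact Or.inl (stmt13_sq_mem M hP0 hsdf hx0 hxy)
  -- main case
  set X2 := M.hmul x x
  set XY := M.hmul x y
  set YX := M.hmul y x
  set Y2 := M.hmul y y
  set NX2 := M.hmul x (-x)
  set NY2 := M.hmul y (-y)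
  set D : Set H := X2 + (XY + (YX + (Y2 + (NX2 + (XY + (YX + NY2)))))) with hD
  have hDsum : Hyper.IsSum M.hmul D := by
    refine ⟨[X2, XY, YX, Y2, NX2, XY, YX, NY2], by simp, ?_, by simp [hD]⟩
    intro C hC
    have pp : ∀ a b : H, Hyper.IsProduct M.hmul (M.hmul a b) := fun a b =>
      ⟨a, [b], (stmt13_hprod_pair M a b).symm⟩
    fin_cases hC <;> exact pp _ _
  -- D meets P
  obtain ⟨a0, ha0⟩ := M.hmul_nonempty x x
  obtain ⟨d0, hd0⟩ := M.hmul_nonempty y y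
  obtain ⟨q, hq⟩ := M.hmul_nonempty x y
  have hqP : q ∈ P := hxy hq
  have hqYX : q ∈ YX := by rw [show YX = M.hmul y x from rfl, M.hmul_comm]; exact hq
  have hna0 : -a0 ∈ NX2 := by
    rw [show NX2 = M.hmul x (-x) from rfl, M.hmul_neg]
    exact Set.neg_mem_neg.mpr ha0
  have hnd0 : -d0 ∈ NY2 := by
    rw [show NY2 = M.hmul y (-y) from rfl, M.hmul_neg]
    exact Set.neg_mem_neg.mpr hd0
  have hwD : a0 + (q + (q + (d0 + ((-a0) + (q + (q + (-d0))))))) ∈ D :=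
    Set.add_mem_add ha0 (Set.add_mem_add hq (Set.add_mem_add hqYX (Set.add_mem_add hd0
      (Set.add_mem_add hna0 (Set.add_mem_add hq (Set.add_mem_add hqYX hnd0))))))
  have hwP : a0 + (q + (q + (d0 + ((-a0) + (q + (q + (-d0))))))) ∈ P := by
    have h4 : q + (q + (q + q)) ∈ P :=
      stmt13_ideal_add M hI hqP (stmt13_ideal_add M hI hqP
        (stmt13_ideal_add M hI hqP hqP))
    have : a0 + (q + (q + (d0 + ((-a0) + (q + (q + (-d0))))))) = q + (q + (q + q)) := by abel
    rw [this]; exact h4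
  have hDP : D ⊆ P := hS.2 D hDsum ⟨_, hwD, hwP⟩
  -- (x+y)² − (x−y)² ⊆ D
  have hEP : Hyper.sq M.hmul (x + y) - Hyper.sq M.hmul (x - y) ⊆ P := by
    intro u hu
    apply hDP
    rw [Set.mem_sub] at hu
    obtain ⟨s, hs, t, ht, hst⟩ := hu
    simp only [Hyper.sq] at hs ht
    have hs' := M.hmul_distrib (x + y) x y hs
    rw [Set.mem_add] at hs'
    obtain ⟨s1, hs1, s2, hs2, hs12⟩ := hs'
    rw [M.hmul_comm] at hs1 hs2
    have hs1' := M.hmul_distrib x x y hs1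
    rw [Set.mem_add] at hs1'
    obtain ⟨a, ha, b, hb, hab⟩ := hs1'
    have hs2' := M.hmul_distrib y x y hs2
    rw [Set.mem_add] at hs2'
    obtain ⟨c, hc, d, hd, hcd⟩ := hs2'
    rw [sub_eq_add_neg] at ht
    have ht' := M.hmul_distrib (x + -y) x (-y) ht
    rw [Set.mem_add] at ht'
    obtain ⟨t1, ht1, t2, ht2, ht12⟩ := ht'
    rw [M.hmul_comm] at ht1 ht2
    have ht1' := M.hmul_distrib x x (-y) ht1
    rw [Set.mem_add] at ht1'
    obtain ⟨a', ha', b', hb', hab'⟩ := ht1'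
    have ht2' := M.hmul_distrib (-y) x (-y) ht2
    rw [Set.mem_add] at ht2'
    obtain ⟨c', hc', d', hd', hcd'⟩ := ht2'
    -- memberships of negatives
    have hna' : -a' ∈ NX2 := by
      rw [show NX2 = M.hmul x (-x) from rfl, M.hmul_neg]
      exact Set.neg_mem_neg.mpr ha'
    have hnb' : -b' ∈ XY := by
      rw [M.hmul_neg] at hb'
      exact Set.mem_neg.mp hb'
    have hnc' : -c' ∈ YX := by
      rw [stmt13_mul_neg_left] at hc'
      exact Set.mem_neg.mp hc'
    have hnd' : -d' ∈ NY2 := by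
      rw [stmt13_mul_neg_left, M.hmul_neg, neg_neg] at hd'
      rw [show NY2 = M.hmul y (-y) from rfl, M.hmul_neg]
      exact Set.neg_mem_neg.mpr hd'
    have hu' : u = a + (b + (c + (d + ((-a') + ((-b') + ((-c') + (-d'))))))) := by
      rw [← hst, ← hs12, ← hab, ← hcd, ← ht12, ← hab', ← hcd']; abel
    rw [hu']
    exact Set.add_mem_add ha (Set.add_mem_add hb (Set.add_mem_add hc (Set.add_mem_add hd
      (Set.add_mem_add hna' (Set.add_mem_add hnb' (Set.add_mem_add hnc' hnd'))))))
  rcases hsdf.2.2 (x + y) (x - y) hxpy hxmy hEP with h | h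
  · right
    apply stmt13_half_mem M e he hunit hS
    have : y + y = (x + y) - (x - y) := by abel
    rw [this]; exact h
  · left
    apply stmt13_half_mem M e he hunit hS
    have : x + x = (x + y) + (x - y) := by abel
    rw [this]; exact h
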